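/- There exists a constant C > 0 such that for every integer M ≥ 2, ∫_0^{2π} | Σ_{k=0}^{M} k² e^{ikx} | dx ≤ C · M² · log M. -/

import Mathlib

lemma abs_exp_sub (x : ℝ) : ‖Complex.exp (Complex.I * x) - 1‖ = 2 * |Real.sin (x/2)| := by
  rw [mul_comm, Complex.exp_mul_I]
  have h0 : (Complex.cos x + Complex.sin x * Complex.I - 1)
      = Complex.ofReal (Real.cos x - 1) + Complex.ofReal (Real.sin x) * Complex.I := by
    push_cast; ring
  rw [h0, Complex.norm_add_mul_I]
  have h : (Real.cos x - 1)^2 + (Real.sin x)^2 = 4 * (Real.sin (x/2))^2 := by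
    have h1 : Real.sin (x/2) ^ 2 = 1/2 - Real.cos (2 * (x/2)) / 2 := Real.sin_sq_eq_half_sub _
    have h2 := Real.sin_sq_add_cos_sq x
    rw [show 2 * (x/2) = x by ring] at h1
    nlinarith
  rw [h, show (4:ℝ) * Real.sin (x/2)^2 = (2 * |Real.sin (x/2)|)^2 by
    rw [mul_pow, _root_.sq_abs]; ring]
  exact Real.sqrt_sq (by positivity)

lemma ne_one {x : ℝ} (h0 : 0 < x) (h2 : x < 2 * Real.pi) :
    Complex.exp (Complex.I * x) ≠ 1 := by
  intro h
  rw [Complex.exp_eq_one_iff] at h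
  obtain ⟨n, hn⟩ := h
  have hx : (x : ℂ) = (n : ℂ) * (2 * Real.pi) := by
    apply mul_left_cancel₀ Complex.I_ne_zero
    rw [hn]; ring
  have hxr : x = (n : ℝ) * (2 * Real.pi) := by exact_mod_cast hx
  have hpi := Real.pi_pos
  have hn0 : (0:ℝ) < (n:ℝ) := by nlinarith [hxr ▸ h0]
  have hn1 : (n:ℝ) < 1 := by nlinarith
  have : (0:ℤ) < n := by exact_mod_cast hn0
  have : (n:ℤ) < 1 := by exact_mod_cast hn1
  omega

lemma sum_odd (M : ℕ) : ∑ i ∈ Finset.range M, (2*(i:ℝ)+1) = (M:ℝ)^2 := by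
  induction M with
  | zero => simp
  | succ n ih => rw [Finset.sum_range_succ, ih]; push_cast; ring

lemma key (M : ℕ) (x : ℝ) (hq : Complex.exp (Complex.I * x) ≠ 1) :
    ‖∑ k ∈ Finset.range (M + 1), (k : ℂ) ^ 2 * Complex.exp (Complex.I * k * x)‖
      ≤ 4 * (M:ℝ)^2 / ‖Complex.exp (Complex.I * x) - 1‖ := by
  set q : ℂ := Complex.exp (Complex.I * x) with hqdef
  have hrw : ∀ k : ℕ, Complex.exp (Complex.I * k * x) = q ^ k := by
    intro k
    rw [hqdef, ← Complex.exp_nat_mul]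
    ring_nf
  have habsq : ‖q‖ = 1 := by
    rw [hqdef, mul_comm, Complex.norm_exp_ofReal_mul_I]
  have hd : 0 < ‖q - 1‖ := by
    rw [norm_pos_iff]
    exact sub_ne_zero.mpr hq
  -- geometric sum bound
  have hG : ∀ m : ℕ, ‖∑ i ∈ Finset.range m, q ^ i‖ ≤ 2 / ‖q - 1‖ := by
    intro m
    rw [geom_sum_eq hq, norm_div]
    gcongr
    calc ‖q ^ m - 1‖ ≤ ‖q ^ m‖ + 1 := by
          simpa using (norm_sub_le (q ^ m) 1)
      _ ≤ 2 := by rw [norm_pow, habsq, one_pow]; norm_num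
  -- Abel summation
  have habel : ∑ k ∈ Finset.range (M + 1), (k : ℂ) ^ 2 * q ^ k
      = ((M:ℂ))^2 • (∑ i ∈ Finset.range (M+1), q ^ i)
        - ∑ i ∈ Finset.range M, (((i:ℂ)+1)^2 - (i:ℂ)^2) • (∑ j ∈ Finset.range (i+1), q ^ j) := by
    have := Finset.sum_range_by_parts (fun k => ((k:ℕ):ℂ)^2) (fun k => q ^ k) (M+1)
    simp only [smul_eq_mul] at this ⊢
    simpa using this
  simp only [hrw]
  rw [habel]
  have h1 : ‖((M:ℂ))^2 • (∑ i ∈ Finset.range (M+1), q ^ i)‖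
      ≤ (M:ℝ)^2 * (2 / ‖q - 1‖) := by
    rw [smul_eq_mul, norm_mul]
    gcongr
    · simp
    · exact hG _
  have h2 : ‖∑ i ∈ Finset.range M, (((i:ℂ)+1)^2 - (i:ℂ)^2) • (∑ j ∈ Finset.range (i+1), q ^ j)‖
      ≤ (M:ℝ)^2 * (2 / ‖q - 1‖) := by
    calc ‖∑ i ∈ Finset.range M, (((i:ℂ)+1)^2 - (i:ℂ)^2) • (∑ j ∈ Finset.range (i+1), q ^ j)‖
        ≤ ∑ i ∈ Finset.range M, ‖(((i:ℂ)+1)^2 - (i:ℂ)^2) • (∑ j ∈ Finset.range (i+1), q ^ j)‖ := by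
          exact norm_sum_le _ _
      _ ≤ ∑ i ∈ Finset.range M, (2*(i:ℝ)+1) * (2 / ‖q - 1‖) := by
          apply Finset.sum_le_sum
          intro i _
          rw [smul_eq_mul, norm_mul]
          have hc : ‖((i:ℂ)+1)^2 - (i:ℂ)^2‖ = 2*(i:ℝ)+1 := by
            have h3 : ((i:ℂ)+1)^2 - (i:ℂ)^2 = ((2*(i:ℝ)+1 : ℝ) : ℂ) := by push_cast; ring
            rw [h3, Complex.norm_real, Real.norm_eq_abs, abs_of_nonneg (by positivity)]
          rw [hc]
          exact mul_le_mul_of_nonneg_left (hG _) (by positivity)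
      _ = (∑ i ∈ Finset.range M, (2*(i:ℝ)+1)) * (2 / ‖q - 1‖) := by
          rw [← Finset.sum_mul]
      _ = (M:ℝ)^2 * (2 / ‖q - 1‖) := by
          rw [sum_odd]
  calc ‖_‖ ≤ _ := norm_sub_le _ _
    _ ≤ (M:ℝ)^2 * (2 / ‖q - 1‖) + (M:ℝ)^2 * (2 / ‖q - 1‖) := add_le_add h1 h2
    _ = 4 * (M:ℝ)^2 / ‖q - 1‖ := by ring

open Real intervalIntegral

theorem stmt_13 : ∃ C : ℝ, 0 < C ∧ ∀ M : ℕ, 2 ≤ M →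
    (∫ x in (0:ℝ)..(2 * Real.pi),
        ‖∑ k ∈ Finset.range (M + 1), (k : ℂ) ^ 2 * Complex.exp (Complex.I * k * x)‖)
      ≤ C * M ^ 2 * Real.log M := by
  refine ⟨100, by norm_num, ?_⟩
  intro M hM
  have hpi := Real.pi_pos
  have hpi2 := Real.pi_gt_three
  have hM2 : (2:ℝ) ≤ (M:ℝ) := by exact_mod_cast hM
  have hMpos : (0:ℝ) < (M:ℝ) := by linarith
  set m : ℝ := (M:ℝ)⁻¹ with hmdef
  have hm : 0 < m := by positivity
  have hmhalf : m ≤ 1/2 := by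
    rw [hmdef]
    rw [inv_le_comm₀ (by positivity) (by norm_num)]
    simpa using hM2
  have hmpi : m ≤ π := by linarith
  have hpim : π ≤ 2 * π - m := by linarith
  set F : ℝ → ℝ := fun x =>
    ‖∑ k ∈ Finset.range (M + 1), (k : ℂ) ^ 2 * Complex.exp (Complex.I * k * x)‖ with hF
  have hFcont : Continuous F := by
    apply continuous_norm.comp
    apply continuous_finset_sum
    intro k _
    exact continuous_const.mul (Complex.continuous_exp.comp (by continuity))
  have hInt : ∀ a b : ℝ, IntervalIntegrable F MeasureTheory.volume a b :=
    fun a b => hFcont.intervalIntegrable a b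
  -- trivial pointwise bound
  have htriv : ∀ x : ℝ, F x ≤ ((M:ℝ)+1) * (M:ℝ)^2 := by
    intro x
    calc F x ≤ ∑ k ∈ Finset.range (M + 1),
          ‖(k : ℂ) ^ 2 * Complex.exp (Complex.I * k * x)‖ := norm_sum_le _ _
      _ ≤ ∑ k ∈ Finset.range (M + 1), (M:ℝ)^2 := by
          apply Finset.sum_le_sum
          intro k hk
          have hk' : k ≤ M := Nat.lt_succ_iff.mp (Finset.mem_range.mp hk)
          have he : Complex.I * k * x = ((k * x : ℝ) : ℂ) * Complex.I := by push_cast; ring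
          rw [norm_mul, he, Complex.norm_exp_ofReal_mul_I, mul_one, norm_pow, Complex.norm_natCast]
          have : (k:ℝ) ≤ (M:ℝ) := by exact_mod_cast hk'
          exact pow_le_pow_left₀ (by positivity) this 2
      _ = ((M:ℝ)+1) * (M:ℝ)^2 := by
          rw [Finset.sum_const, Finset.card_range]; push_cast; ring
  -- bound on [m, π]
  have hb2 : ∀ x ∈ Set.Icc m π, F x ≤ 2 * π * (M:ℝ)^2 * (1/x) := by
    intro x hx
    obtain ⟨hx1, hx2⟩ := hx
    have hx0 : 0 < x := lt_of_lt_of_le hm hx1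
    have hq := ne_one hx0 (by linarith)
    have hsin : x / π ≤ Real.sin (x/2) := by
      have h := Real.mul_le_sin (x := x/2) (by positivity) (by linarith)
      have heq : 2/π*(x/2) = x/π := by field_simp
      linarith
    have hlow : 2 * (x / π) ≤ ‖Complex.exp (Complex.I * x) - 1‖ := by
      rw [abs_exp_sub]
      have : Real.sin (x/2) ≤ |Real.sin (x/2)| := le_abs_self _
      linarith
    calc F x ≤ 4 * (M:ℝ)^2 / ‖Complex.exp (Complex.I * x) - 1‖ := key M x hq
      _ ≤ 4 * (M:ℝ)^2 / (2 * (x / π)) := by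
          apply div_le_div_of_nonneg_left (by positivity) (by positivity) hlow
      _ = 2 * π * (M:ℝ)^2 * (1/x) := by field_simp; ring
  -- bound on [π, 2π - m]
  have hb3 : ∀ x ∈ Set.Icc π (2*π - m), F x ≤ 2 * π * (M:ℝ)^2 * (1/(2*π - x)) := by
    intro x hx
    obtain ⟨hx1, hx2⟩ := hx
    have hy0 : 0 < 2*π - x := by linarith
    have hq := ne_one (x := x) (by linarith) (by linarith)
    have hsin : (2*π - x) / π ≤ Real.sin (x/2) := by
      have heq : Real.sin (x/2) = Real.sin (π - x/2) := (Real.sin_pi_sub _).symm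
      have := Real.mul_le_sin (x := π - x/2) (by linarith) (by linarith)
      rw [heq]
      calc (2*π - x)/π = 2/π * (π - x/2) := by field_simp
        _ ≤ Real.sin (π - x/2) := this
    have hlow : 2 * ((2*π - x) / π) ≤ ‖Complex.exp (Complex.I * x) - 1‖ := by
      rw [abs_exp_sub]
      have : Real.sin (x/2) ≤ |Real.sin (x/2)| := le_abs_self _
      linarith
    calc F x ≤ 4 * (M:ℝ)^2 / ‖Complex.exp (Complex.I * x) - 1‖ := key M x hq
      _ ≤ 4 * (M:ℝ)^2 / (2 * ((2*π - x) / π)) := by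
          apply div_le_div_of_nonneg_left (by positivity) (by positivity) hlow
      _ = 2 * π * (M:ℝ)^2 * (1/(2*π - x)) := by field_simp; ring
  -- split the integral
  have hsplit : (∫ x in (0:ℝ)..(2*π), F x)
      = (∫ x in (0:ℝ)..m, F x) + (∫ x in m..π, F x)
        + (∫ x in π..(2*π - m), F x) + (∫ x in (2*π - m)..(2*π), F x) := by
    rw [integral_add_adjacent_intervals (hInt 0 m) (hInt m π),
        integral_add_adjacent_intervals (hInt 0 π) (hInt π (2*π - m)),
        integral_add_adjacent_intervals (hInt 0 (2*π - m)) (hInt (2*π - m) (2*π))]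
  -- piece 1
  have hB1 : (∫ x in (0:ℝ)..m, F x) ≤ m * (((M:ℝ)+1) * (M:ℝ)^2) := by
    calc (∫ x in (0:ℝ)..m, F x) ≤ ∫ _ in (0:ℝ)..m, ((M:ℝ)+1) * (M:ℝ)^2 :=
          integral_mono_on hm.le (hInt 0 m) intervalIntegrable_const (fun x _ => htriv x)
      _ = m * (((M:ℝ)+1) * (M:ℝ)^2) := by rw [integral_const]; simp
  -- piece 4
  have hB4 : (∫ x in (2*π - m)..(2*π), F x) ≤ m * (((M:ℝ)+1) * (M:ℝ)^2) := by
    calc (∫ x in (2*π - m)..(2*π), F x) ≤ ∫ _ in (2*π - m)..(2*π), ((M:ℝ)+1) * (M:ℝ)^2 :=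
          integral_mono_on (by linarith) (hInt _ _) intervalIntegrable_const (fun x _ => htriv x)
      _ = m * (((M:ℝ)+1) * (M:ℝ)^2) := by rw [integral_const]; rw [smul_eq_mul]; ring_nf
  -- integrability of the comparison functions
  have hg2 : IntervalIntegrable (fun x : ℝ => 2 * π * (M:ℝ)^2 * (1/x))
      MeasureTheory.volume m π := by
    apply ContinuousOn.intervalIntegrable
    apply ContinuousOn.mul continuousOn_const
    apply ContinuousOn.div continuousOn_const continuousOn_id
    intro x hx
    rw [Set.uIcc_of_le hmpi] at hx
    exact ne_of_gt (lt_of_lt_of_le hm hx.1)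
  have hg3 : IntervalIntegrable (fun x : ℝ => 2 * π * (M:ℝ)^2 * (1/(2*π - x)))
      MeasureTheory.volume π (2*π - m) := by
    apply ContinuousOn.intervalIntegrable
    apply ContinuousOn.mul continuousOn_const
    apply ContinuousOn.div continuousOn_const (by fun_prop)
    intro x hx
    rw [Set.uIcc_of_le hpim] at hx
    have := hx.2
    intro h; nlinarith [hm]
  have hlogval : Real.log (π / m) = Real.log (π * M) := by
    rw [hmdef, div_eq_mul_inv, inv_inv]
  -- piece 2
  have hB2 : (∫ x in m..π, F x) ≤ 2 * π * (M:ℝ)^2 * Real.log (π * M) := by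
    calc (∫ x in m..π, F x) ≤ ∫ x in m..π, 2 * π * (M:ℝ)^2 * (1/x) := by
          apply integral_mono_on hmpi (hInt m π) hg2
          intro x hx; exact hb2 x hx
      _ = 2 * π * (M:ℝ)^2 * Real.log (π * M) := by
          rw [integral_const_mul, integral_one_div, hlogval]
          rw [Set.uIcc_of_le hmpi]
          rintro ⟨h1, -⟩; linarith
  -- piece 3
  have hB3 : (∫ x in π..(2*π - m), F x) ≤ 2 * π * (M:ℝ)^2 * Real.log (π * M) := by
    calc (∫ x in π..(2*π - m), F x) ≤ ∫ x in π..(2*π - m), 2 * π * (M:ℝ)^2 * (1/(2*π - x)) := by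
          apply integral_mono_on hpim (hInt _ _) hg3
          intro x hx; exact hb3 x hx
      _ = ∫ x in m..π, 2 * π * (M:ℝ)^2 * (1/x) := by
          have h := integral_comp_sub_left (a := π) (b := 2*π - m)
            (fun y : ℝ => 2 * π * (M:ℝ)^2 * (1/y)) (2*π)
          simp only [show 2*π - (2*π - m) = m by ring, show 2*π - π = π by ring] at h
          exact h
      _ = 2 * π * (M:ℝ)^2 * Real.log (π * M) := by
          rw [integral_const_mul, integral_one_div, hlogval]
          rw [Set.uIcc_of_le hmpi]
          rintro ⟨h1, -⟩; linarith
  -- final arithmetic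
  have hlogpi : Real.log (π * M) ≤ 3 + Real.log M := by
    rw [Real.log_mul (by positivity) (by positivity)]
    have := Real.log_le_sub_one_of_pos hpi
    have hpile : π ≤ 4 := by linarith [Real.pi_le_four]
    linarith
  have hlogM : (1:ℝ)/2 ≤ Real.log M := by
    have h2 : Real.log 2 ≤ Real.log M := Real.log_le_log (by norm_num) hM2
    have := Real.log_two_gt_d9
    linarith
  have hmb : m * (((M:ℝ)+1) * (M:ℝ)^2) ≤ 2 * (M:ℝ)^2 := by
    rw [hmdef]
    rw [inv_mul_le_iff₀ hMpos] -- (M+1)*M^2 ≤ 2M^2 * M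
    nlinarith
  have hpile : π ≤ 3.15 := by linarith [Real.pi_lt_d2.le]
  rw [hsplit]
  have hMsq : (0:ℝ) < (M:ℝ)^2 := by positivity
  nlinarith [hB1, hB2, hB3, hB4, hlogpi, hlogM, hmb, hMsq,
    mul_le_mul_of_nonneg_left hlogpi (by positivity : (0:ℝ) ≤ 2 * π * (M:ℝ)^2),
    mul_le_mul_of_nonneg_left hlogM (by positivity : (0:ℝ) ≤ (M:ℝ)^2)]
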